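/- arXiv:0810.1267 — 4 statements merged into one kernel-verified Lean document; each statement's English description precedes it below -/
import Mathlib

section
/- Let A_1,…,A_n be independent, identically distributed nonnegative random variables with 𝔼[A_τ] = λ ≥ 0 and 𝔼[A_τ²] = m₂ < ∞, and let S be a Bernoulli random variable independent of (A_1,…,A_n) with ℙ(S = 0) = P_e. Let ε > 0, set R = λ + ε, and assume 0 ≤ P_e ≤ ε/(2(λ + ε)). Then for every q with q ≥ nR, 𝔼[(q + Σ_{τ=1}^n A_τ − nRS)²] − q² ≤ −(nε)·q + B′, where B′ = n·m₂ + n(n−1)λ² + n²R²(1 − P_e) − 2n²λR(1 − P_e). -/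
open MeasureTheory ProbabilityTheory

/-- Lyapunov drift bound for `V(q) = q²` over one `n`-slot block when the queue is long enough
to transmit (`q ≥ n R`, with `R = lam + eps`): with i.i.d. nonnegative arrivals of mean `lam`
and second moment `m2`, and an independent Bernoulli success indicator `S` with failure
probability `Pe ≤ eps / (2 (lam + eps))`,
`𝔼[(q + ∑ τ, A τ − n R S)²] − q² ≤ −(n eps) q + B'`, where
`B' = n m2 + n(n−1) lam² + n² R² (1−Pe) − 2 n² lam R (1−Pe)`. -/
theorem block_drift_long_queue
    {Ω : Type*} [MeasureSpace Ω] [IsProbabilityMeasure (ℙ : Measure Ω)]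
    (n : ℕ) (A : Fin n → Ω → ℝ) (S : Ω → ℝ) (lam m2 Pe eps R : ℝ)
    (hA_meas : ∀ τ, Measurable (A τ)) (hS_meas : Measurable S)
    (hA_nonneg : ∀ τ ω, 0 ≤ A τ ω)
    (h_indep : iIndepFun
      (fun o : Option (Fin n) => o.elim S A) ℙ)
    (h_ident : ∀ τ τ' : Fin n, IdentDistrib (A τ) (A τ') ℙ ℙ)
    (hA_int : ∀ τ, Integrable (A τ) ℙ)
    (hA_mean : ∀ τ, ∫ ω, A τ ω = lam)
    (hA_sq_int : ∀ τ, Integrable (fun ω => (A τ ω) ^ 2) ℙ)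
    (hA_sq : ∀ τ, ∫ ω, (A τ ω) ^ 2 = m2)
    (hS_val : ∀ ω, S ω = 0 ∨ S ω = 1)
    (hS_zero : ℙ {ω | S ω = 0} = ENNReal.ofReal Pe)
    (hlam : 0 ≤ lam) (heps : 0 < eps) (hR : R = lam + eps)
    (hPe0 : 0 ≤ Pe) (hPe : Pe ≤ eps / (2 * (lam + eps)))
    (q : ℝ) (hq : (n : ℝ) * R ≤ q) :
    (∫ ω, (q + ∑ τ, A τ ω - (n : ℝ) * R * S ω) ^ 2) - q ^ 2 ≤
      -((n : ℝ) * eps) * q +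
        ((n : ℝ) * m2 + (n : ℝ) * ((n : ℝ) - 1) * lam ^ 2
          + (n : ℝ) ^ 2 * R ^ 2 * (1 - Pe)
          - 2 * (n : ℝ) ^ 2 * lam * R * (1 - Pe)) := by
  have hn0 : (0:ℝ) ≤ n := Nat.cast_nonneg n
  have hRpos : 0 < R := by rw [hR]; linarith
  have hq0 : 0 ≤ q := le_trans (mul_nonneg hn0 hRpos.le) hq
  -- independence of each A τ with S
  have hAS_indep : ∀ τ, IndepFun (A τ) S ℙ := by
    intro τ
    exact h_indep.indepFun (i := some τ) (j := none) (by simp)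
  have hAA_indep : ∀ τ τ' : Fin n, τ ≠ τ' → IndepFun (A τ) (A τ') ℙ := by
    intro τ τ' h
    exact h_indep.indepFun (i := some τ) (j := some τ') (by simp [h])
  -- S is an indicator
  have hS_int : Integrable S ℙ := by
    apply Integrable.mono' (integrable_const (1:ℝ)) hS_meas.aestronglyMeasurable
    filter_upwards with ω
    rcases hS_val ω with h | h <;> simp [h]
  have hES : ∫ ω, S ω = 1 - Pe := by
    have h1 : (fun ω => 1 - S ω) = Set.indicator {ω | S ω = 0} (fun _ => (1:ℝ)) := by
      funext ω
      rcases hS_val ω with h | h <;> simp [Set.indicator, h]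
    have hmeas : MeasurableSet {ω | S ω = 0} := hS_meas (measurableSet_singleton 0)
    have h2 : ∫ ω, (1 - S ω) = Pe := by
      rw [h1, integral_indicator_const (1:ℝ) hmeas, measureReal_def, hS_zero, ENNReal.toReal_ofReal hPe0]
      simp
    have h3 : ∫ ω, (1 - S ω) = 1 - ∫ ω, S ω := by
      rw [integral_sub (integrable_const 1) hS_int]
      simp
    linarith [h2.symm.trans h3]
  -- expectations of the sum
  have hX_int : Integrable (fun ω => ∑ τ, A τ ω) ℙ :=
    integrable_finset_sum _ fun τ _ => hA_int τ
  have hEX : ∫ ω, ∑ τ, A τ ω = (n : ℝ) * lam := by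
    rw [integral_finset_sum _ fun τ _ => hA_int τ]
    simp [hA_mean, Finset.card_univ]
  -- products A τ * A τ'
  have hprod_int : ∀ τ τ' : Fin n, Integrable (fun ω => A τ ω * A τ' ω) ℙ := by
    intro τ τ'
    by_cases h : τ = τ'
    · subst h
      simpa [pow_two] using hA_sq_int τ
    · exact (hAA_indep τ τ' h).integrable_mul (hA_int τ) (hA_int τ')
  have hprod : ∀ τ τ' : Fin n, ∫ ω, A τ ω * A τ' ω =
      if τ' = τ then m2 else lam ^ 2 := by
    intro τ τ'
    by_cases h : τ' = τ
    · subst h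
      simp only [if_true]
      simpa [pow_two] using hA_sq τ'
    · rw [if_neg h]
      have := (hAA_indep τ τ' (fun hh => h hh.symm)).integral_mul_eq_mul_integral
        (hA_int τ).aestronglyMeasurable (hA_int τ').aestronglyMeasurable
      rw [show (∫ ω, A τ ω * A τ' ω) = integral ℙ (A τ * A τ') from rfl,
        this, hA_mean, hA_mean]
      ring
  have hX2_int : Integrable (fun ω => (∑ τ, A τ ω) ^ 2) ℙ := by
    have : (fun ω => (∑ τ, A τ ω) ^ 2)
        = fun ω => ∑ τ, ∑ τ', A τ ω * A τ' ω := by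
      funext ω
      rw [pow_two, Finset.sum_mul_sum]
    rw [this]
    exact integrable_finset_sum _ fun τ _ =>
      integrable_finset_sum _ fun τ' _ => hprod_int τ τ'
  have hEX2 : ∫ ω, (∑ τ, A τ ω) ^ 2
      = (n : ℝ) * m2 + (n : ℝ) * ((n : ℝ) - 1) * lam ^ 2 := by
    have h1 : (fun ω => (∑ τ, A τ ω) ^ 2)
        = fun ω => ∑ τ, ∑ τ', A τ ω * A τ' ω := by
      funext ω
      rw [pow_two, Finset.sum_mul_sum]
    rw [h1, integral_finset_sum _ fun τ _ =>
      integrable_finset_sum _ fun τ' _ => hprod_int τ τ']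
    have h2 : ∀ τ : Fin n, ∫ ω, ∑ τ', A τ ω * A τ' ω
        = m2 + ((n : ℝ) - 1) * lam ^ 2 := by
      intro τ
      rw [integral_finset_sum _ fun τ' _ => hprod_int τ τ']
      have h3 : ∀ τ' : Fin n, ∫ ω, A τ ω * A τ' ω
          = (if τ' = τ then m2 - lam ^ 2 else 0) + lam ^ 2 := by
        intro τ'
        rw [hprod τ τ']
        by_cases h : τ' = τ <;> simp [h]
      simp only [h3]
      rw [Finset.sum_add_distrib, Finset.sum_ite_eq' Finset.univ τ
        (fun _ => m2 - lam ^ 2)]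
      simp [Finset.card_univ]
      ring
    simp only [h2]
    simp [Finset.card_univ]
    ring
  -- E[X S]
  have hXS_int : Integrable (fun ω => (∑ τ, A τ ω) * S ω) ℙ := by
    have : (fun ω => (∑ τ, A τ ω) * S ω) = fun ω => ∑ τ, A τ ω * S ω := by
      funext ω; rw [Finset.sum_mul]
    rw [this]
    exact integrable_finset_sum _ fun τ _ =>
      (hAS_indep τ).integrable_mul (hA_int τ) hS_int
  have hEXS : ∫ ω, (∑ τ, A τ ω) * S ω = (n : ℝ) * lam * (1 - Pe) := by
    have h1 : (fun ω => (∑ τ, A τ ω) * S ω) = fun ω => ∑ τ, A τ ω * S ω := by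
      funext ω; rw [Finset.sum_mul]
    have hsum := integral_finset_sum (μ := ℙ) Finset.univ
      (f := fun (τ : Fin n) (ω : Ω) => A τ ω * S ω)
      (fun τ _ => (hAS_indep τ).integrable_mul (hA_int τ) hS_int)
    rw [h1, hsum]
    have h2 : ∀ τ : Fin n, ∫ ω, A τ ω * S ω = lam * (1 - Pe) := by
      intro τ
      have := (hAS_indep τ).integral_mul_eq_mul_integral
        (hA_int τ).aestronglyMeasurable hS_int.aestronglyMeasurable
      rw [show (∫ ω, A τ ω * S ω) = integral ℙ (A τ * S) from rfl,
        this, hA_mean, hES]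
    simp only [h2]
    simp [Finset.card_univ]
    ring
  -- expand the square pointwise
  have hpt : ∀ ω, (q + ∑ τ, A τ ω - (n : ℝ) * R * S ω) ^ 2
      = q ^ 2 + (∑ τ, A τ ω) ^ 2 + ((n : ℝ) * R) ^ 2 * S ω
        + 2 * q * (∑ τ, A τ ω) - 2 * q * ((n : ℝ) * R) * S ω
        - 2 * ((n : ℝ) * R) * ((∑ τ, A τ ω) * S ω) := by
    intro ω
    rcases hS_val ω with h | h <;> rw [h] <;> ring
  have hint : ∫ ω, (q + ∑ τ, A τ ω - (n : ℝ) * R * S ω) ^ 2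
      = q ^ 2 + ((n : ℝ) * m2 + (n : ℝ) * ((n : ℝ) - 1) * lam ^ 2)
        + ((n : ℝ) * R) ^ 2 * (1 - Pe)
        + 2 * q * ((n : ℝ) * lam) - 2 * q * ((n : ℝ) * R) * (1 - Pe)
        - 2 * ((n : ℝ) * R) * ((n : ℝ) * lam * (1 - Pe)) := by
    rw [integral_congr_ae (Filter.Eventually.of_forall hpt)]
    rw [integral_sub (by
        exact (((((integrable_const _).add hX2_int).add
          (hS_int.const_mul _)).add (hX_int.const_mul _)).sub
          (hS_int.const_mul _))
      ) (hXS_int.const_mul _)]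
    rw [integral_sub (by
        exact ((((integrable_const _).add hX2_int).add
          (hS_int.const_mul _)).add (hX_int.const_mul _))
      ) (hS_int.const_mul _)]
    rw [integral_add (by
        exact (((integrable_const _).add hX2_int).add (hS_int.const_mul _))
      ) (hX_int.const_mul _)]
    rw [integral_add (by exact (integrable_const _).add hX2_int)
      (hS_int.const_mul _)]
    rw [integral_add (integrable_const _) hX2_int]
    rw [integral_const, integral_const_mul, integral_const_mul, integral_const_mul,
      integral_const_mul, hEX2, hES, hEX, hEXS]
    simp
  rw [hint]
  -- reduce to the drift inequality
  have hRPe : R * Pe ≤ eps / 2 := by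
    have h1 := mul_le_mul_of_nonneg_left hPe hRpos.le
    have h2 : R * (eps / (2 * (lam + eps))) = eps / 2 := by
      rw [hR]; field_simp
    linarith [h1.trans_eq h2]
  nlinarith [mul_nonneg (mul_nonneg hn0 hq0) (by linarith : (0:ℝ) ≤ eps - 2 * (R * Pe)),
    sq_nonneg ((n:ℝ) * R), mul_nonneg hn0 hq0]
end

section
/- Let A_1,…,A_n be independent, identically distributed nonnegative random variables with 𝔼[A_τ] = λ ≥ 0 and 𝔼[A_τ²] = m₂ < ∞, and let S be a Bernoulli random variable independent of (A_1,…,A_n) with ℙ(S = 0) = P_e, where 0 ≤ P_e ≤ ε/(2(λ + ε)) for some ε > 0. Set R = λ + ε and define the updated queue length Q′ = q + Σ_{τ=1}^n A_τ if q < nR, and Q′ = q − nRS + Σ_{τ=1}^n A_τ if q ≥ nR. Then for every q ≥ 0, 𝔼[Q′²] − q² ≤ −(nε)·q + B, where B = max{B′, B″} with B′ = n·m₂ + n(n−1)λ² + n²R²(1 − P_e) − 2n²λR(1 − P_e) and B″ = n²R(2λ + ε) + n·m₂ + n(n−1)λ². -/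
open MeasureTheory ProbabilityTheory

/-- Combined per-queue `n`-slot Lyapunov drift bound for the threshold scheduling scheme:
the queue updates to `Q' = q + ∑ τ, A τ` if `q < n R`, and to `Q' = q − n R S + ∑ τ, A τ`
if `q ≥ n R` (with `R = lam + eps`, i.i.d. nonnegative arrivals of mean `lam` and second
moment `m2`, and independent Bernoulli success indicator `S` with failure probability
`Pe ≤ eps / (2 (lam + eps))`). Then for every `q ≥ 0`,
`𝔼[Q'²] − q² ≤ −(n eps) q + max {B', B''}`. -/
theorem block_drift_combined
    {Ω : Type*} [MeasureSpace Ω] [IsProbabilityMeasure (ℙ : Measure Ω)]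
    (n : ℕ) (A : Fin n → Ω → ℝ) (S : Ω → ℝ) (lam m2 Pe eps R : ℝ)
    (hA_meas : ∀ τ, Measurable (A τ)) (hS_meas : Measurable S)
    (hA_nonneg : ∀ τ ω, 0 ≤ A τ ω)
    (h_indep : iIndepFun
      (fun o : Option (Fin n) => o.elim S A) ℙ)
    (h_ident : ∀ τ τ' : Fin n, IdentDistrib (A τ) (A τ') ℙ ℙ)
    (hA_int : ∀ τ, Integrable (A τ) ℙ)
    (hA_mean : ∀ τ, ∫ ω, A τ ω = lam)
    (hA_sq_int : ∀ τ, Integrable (fun ω => (A τ ω) ^ 2) ℙ)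
    (hA_sq : ∀ τ, ∫ ω, (A τ ω) ^ 2 = m2)
    (hS_val : ∀ ω, S ω = 0 ∨ S ω = 1)
    (hS_zero : ℙ {ω | S ω = 0} = ENNReal.ofReal Pe)
    (hlam : 0 ≤ lam) (heps : 0 < eps) (hR : R = lam + eps)
    (hPe0 : 0 ≤ Pe) (hPe : Pe ≤ eps / (2 * (lam + eps)))
    (q : ℝ) (hq0 : 0 ≤ q)
    (Q' : Ω → ℝ)
    (hQ' : ∀ ω, Q' ω = if q < (n : ℝ) * R then q + ∑ τ, A τ ω
      else q - (n : ℝ) * R * S ω + ∑ τ, A τ ω) :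
    (∫ ω, (Q' ω) ^ 2) - q ^ 2 ≤
      -((n : ℝ) * eps) * q +
        max ((n : ℝ) * m2 + (n : ℝ) * ((n : ℝ) - 1) * lam ^ 2
              + (n : ℝ) ^ 2 * R ^ 2 * (1 - Pe)
              - 2 * (n : ℝ) ^ 2 * lam * R * (1 - Pe))
            ((n : ℝ) ^ 2 * R * (2 * lam + eps)
              + (n : ℝ) * m2 + (n : ℝ) * ((n : ℝ) - 1) * lam ^ 2) := by
  have hn : (0:ℝ) ≤ n := Nat.cast_nonneg n
  have hRpos : 0 < R := by rw [hR]; linarith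
  -- T facts
  set T : Ω → ℝ := fun ω => ∑ τ, A τ ω with hTdef
  have hT_meas : Measurable T := Finset.measurable_sum _ (fun τ _ => hA_meas τ)
  have hT_int : Integrable T ℙ := integrable_finset_sum _ (fun τ _ => hA_int τ)
  have hT_integral : ∫ ω, T ω = (n:ℝ) * lam := by
    simp only [hTdef]
    rw [integral_finset_sum _ (fun τ _ => hA_int τ)]
    simp [hA_mean, Finset.sum_const, Finset.card_univ, mul_comm]
  -- S facts
  have hS_int : Integrable S ℙ := by
    refine (integrable_const (1:ℝ)).mono' hS_meas.aestronglyMeasurable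
      (Filter.Eventually.of_forall fun ω => ?_)
    rcases hS_val ω with h | h <;> simp [h]
  have hPe1 : Pe ≤ 1 := by
    have h2 : eps / (2 * (lam + eps)) ≤ 1 := by
      rw [div_le_one (by linarith)]; linarith
    linarith
  have hs1 : {ω | S ω = 1} = {ω | S ω = 0}ᶜ := by
    ext ω
    simp only [Set.mem_compl_iff, Set.mem_setOf_eq]
    constructor
    · intro h h0; rw [h0] at h; norm_num at h
    · intro h; rcases hS_val ω with h0 | h1
      · exact absurd h0 h
      · exact h1
  have hs0_meas : MeasurableSet {ω | S ω = 0} := hS_meas (measurableSet_singleton 0)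
  have hm1 : ℙ {ω | S ω = 1} = 1 - ENNReal.ofReal Pe := by
    rw [hs1, measure_compl hs0_meas (measure_ne_top _ _), measure_univ, hS_zero]
  have hS_integral : ∫ ω, S ω = 1 - Pe := by
    have hset : S = Set.indicator {ω | S ω = 1} (fun _ => (1:ℝ)) := by
      funext ω
      rcases hS_val ω with h | h
      · simp [Set.indicator, Set.mem_setOf_eq, h]
      · simp [Set.indicator, Set.mem_setOf_eq, h]
    have hs1_meas : MeasurableSet {ω | S ω = 1} := hS_meas (measurableSet_singleton 1)
    rw [hset, integral_indicator_const (1:ℝ) hs1_meas, measureReal_def, hm1, smul_eq_mul, mul_one,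
      ENNReal.toReal_sub_of_le (ENNReal.ofReal_le_one.mpr hPe1) ENNReal.one_ne_top]
    simp [ENNReal.toReal_ofReal hPe0]
  -- independence
  have hSA : ∀ τ, IndepFun S (A τ) ℙ := fun τ =>
    h_indep.indepFun (show (none : Option (Fin n)) ≠ some τ by simp)
  have hAA : ∀ τ τ' : Fin n, τ ≠ τ' → IndepFun (A τ) (A τ') ℙ := fun τ τ' h =>
    h_indep.indepFun (show (some τ : Option (Fin n)) ≠ some τ' by simpa using h)
  have hprodAA_int : ∀ τ τ' : Fin n, Integrable (fun ω => A τ ω * A τ' ω) ℙ := by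
    intro τ τ'
    by_cases h : τ = τ'
    · subst h; simpa [pow_two] using hA_sq_int τ
    · exact (hAA τ τ' h).integrable_mul (hA_int τ) (hA_int τ')
  have hprodAA : ∀ τ τ' : Fin n, (∫ ω, A τ ω * A τ' ω) = if τ = τ' then m2 else lam ^ 2 := by
    intro τ τ'
    by_cases h : τ = τ'
    · subst h; rw [if_pos rfl, ← hA_sq τ]
      congr 1; funext ω; ring
    · rw [if_neg h,
        (hAA τ τ' h).integral_fun_mul_eq_mul_integral (hA_meas τ).aestronglyMeasurable
          (hA_meas τ').aestronglyMeasurable, hA_mean, hA_mean]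
      ring
  -- T^2 facts
  have hT2_eq : ∀ ω, T ω ^ 2 = ∑ τ : Fin n, ∑ τ' : Fin n, A τ ω * A τ' ω := by
    intro ω
    simp only [hTdef]
    rw [pow_two]
    exact Finset.sum_mul_sum _ _ _ _
  have hT2_int : Integrable (fun ω => T ω ^ 2) ℙ := by
    have h : (fun ω => T ω ^ 2) = fun ω => ∑ τ : Fin n, ∑ τ' : Fin n, A τ ω * A τ' ω :=
      funext hT2_eq
    rw [h]
    exact integrable_finset_sum _ fun τ _ =>
      integrable_finset_sum _ fun τ' _ => hprodAA_int τ τ'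
  have hT2_integral : ∫ ω, T ω ^ 2 = (n:ℝ) * m2 + (n:ℝ) * ((n:ℝ) - 1) * lam ^ 2 := by
    simp only [hT2_eq]
    rw [integral_finset_sum _ (fun τ _ =>
      integrable_finset_sum _ fun τ' _ => hprodAA_int τ τ')]
    have h1 : ∀ τ : Fin n, (∫ ω, ∑ τ' : Fin n, A τ ω * A τ' ω)
        = m2 + ((n:ℝ) - 1) * lam ^ 2 := by
      intro τ
      rw [integral_finset_sum _ (fun τ' _ => hprodAA_int τ τ')]
      have h2 : ∀ τ' : Fin n, (∫ ω, A τ ω * A τ' ω)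
          = lam ^ 2 + (if τ = τ' then m2 - lam ^ 2 else 0) := by
        intro τ'; rw [hprodAA τ τ']; split <;> ring
      simp only [h2]
      rw [Finset.sum_add_distrib, Finset.sum_const, Finset.sum_ite_eq, Finset.card_univ]
      simp [Fintype.card_fin]
      ring
    simp only [h1]
    rw [Finset.sum_const, Finset.card_univ]
    simp [Fintype.card_fin]
    ring
  -- S*T facts
  have hSA_int : ∀ τ, Integrable (fun ω => S ω * A τ ω) ℙ := fun τ =>
    (hSA τ).integrable_mul hS_int (hA_int τ)
  have hST_eq : ∀ ω, S ω * T ω = ∑ τ : Fin n, S ω * A τ ω := by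
    intro ω; simp only [hTdef]; rw [Finset.mul_sum]
  have hST_int : Integrable (fun ω => S ω * T ω) ℙ := by
    rw [funext hST_eq]
    exact integrable_finset_sum _ fun τ _ => hSA_int τ
  have hST_integral : ∫ ω, S ω * T ω = (1 - Pe) * ((n:ℝ) * lam) := by
    simp only [hST_eq]
    rw [integral_finset_sum _ (fun τ _ => hSA_int τ)]
    have h1 : ∀ τ : Fin n, (∫ ω, S ω * A τ ω) = (1 - Pe) * lam := fun τ => by
      rw [(hSA τ).integral_fun_mul_eq_mul_integral hS_meas.aestronglyMeasurable
        (hA_meas τ).aestronglyMeasurable, hS_integral, hA_mean]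
    simp only [h1]
    rw [Finset.sum_const, Finset.card_univ]
    simp [Fintype.card_fin]
    ring
  -- case split
  by_cases hlt : q < (n:ℝ) * R
  · -- case q < nR
    have hQeq : (fun ω => (Q' ω) ^ 2)
        = fun ω => q ^ 2 + (2 * q) * T ω + T ω ^ 2 := by
      funext ω
      rw [hQ' ω, if_pos hlt]
      simp only [hTdef]
      ring
    have hI : ∫ ω, (Q' ω) ^ 2
        = q ^ 2 + 2 * q * ((n:ℝ) * lam) + ((n:ℝ) * m2 + (n:ℝ) * ((n:ℝ) - 1) * lam ^ 2) := by
      have h1 : Integrable (fun ω => q ^ 2 + 2 * q * T ω) ℙ :=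
        (integrable_const _).add (hT_int.const_mul _)
      rw [hQeq, integral_add h1 hT2_int,
        integral_add (integrable_const _) (hT_int.const_mul _),
        integral_const, integral_const_mul, hT_integral, hT2_integral]
      simp
    rw [hI]
    refine le_trans ?_ (add_le_add_right (le_max_right _ _) _)
    have hfact : 0 ≤ (n:ℝ) * ((n:ℝ) * R - q) * (2 * lam + eps) :=
      mul_nonneg (mul_nonneg hn (by linarith)) (by linarith)
    nlinarith [hfact]
  · -- case q ≥ nR
    push_neg at hlt
    set c : ℝ := (n:ℝ) * R with hc
    have hQeq : (fun ω => (Q' ω) ^ 2)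
        = fun ω => q ^ 2 + (c ^ 2) * S ω + T ω ^ 2 + (-(2 * q * c)) * S ω
          + (2 * q) * T ω + (-(2 * c)) * (S ω * T ω) := by
      funext ω
      rw [hQ' ω, if_neg (not_lt.mpr hlt)]
      simp only [hTdef, hc]
      rcases hS_val ω with h | h <;> rw [h] <;> ring
    have hI : ∫ ω, (Q' ω) ^ 2
        = q ^ 2 + c ^ 2 * (1 - Pe) + ((n:ℝ) * m2 + (n:ℝ) * ((n:ℝ) - 1) * lam ^ 2)
          + (-(2 * q * c)) * (1 - Pe) + 2 * q * ((n:ℝ) * lam)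
          + (-(2 * c)) * ((1 - Pe) * ((n:ℝ) * lam)) := by
      have i1 : Integrable (fun ω => q ^ 2 + c ^ 2 * S ω) ℙ :=
        (integrable_const _).add (hS_int.const_mul _)
      have i2 : Integrable (fun ω => q ^ 2 + c ^ 2 * S ω + T ω ^ 2) ℙ := i1.add hT2_int
      have i3 : Integrable (fun ω => q ^ 2 + c ^ 2 * S ω + T ω ^ 2
          + -(2 * q * c) * S ω) ℙ := i2.add (hS_int.const_mul _)
      have i4 : Integrable (fun ω => q ^ 2 + c ^ 2 * S ω + T ω ^ 2
          + -(2 * q * c) * S ω + 2 * q * T ω) ℙ := i3.add (hT_int.const_mul _)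
      rw [hQeq, integral_add i4 (hST_int.const_mul _),
        integral_add i3 (hT_int.const_mul _),
        integral_add i2 (hS_int.const_mul _),
        integral_add i1 hT2_int,
        integral_add (integrable_const _) (hS_int.const_mul _),
        integral_const, integral_const_mul, integral_const_mul, integral_const_mul,
        integral_const_mul, hS_integral, hT_integral, hT2_integral, hST_integral]
      simp
    rw [hI]
    refine le_trans ?_ (add_le_add_right (le_max_left _ _) _)
    have hPe' : Pe * (2 * (lam + eps)) ≤ eps :=
      (le_div_iff₀ (by linarith)).mp hPe
    have hkey : 0 ≤ 2 * R * (1 - Pe) - 2 * lam - eps := by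
      have : R * Pe ≤ eps / 2 := by rw [hR]; nlinarith
      nlinarith [hRpos]
    have hfact : 0 ≤ q * ((n:ℝ) * (2 * R * (1 - Pe) - 2 * lam - eps)) :=
      mul_nonneg hq0 (mul_nonneg hn hkey)
    simp only [hc]
    nlinarith [hfact]
end

section
/- Consider M queues operating over blocks of n slots. For each user i, let (A_i(τ))_{τ∈ℕ} be i.i.d. nonnegative arrivals with 𝔼[A_i(τ)] = λ_i and 𝔼[A_i(τ)²] = m₂ᵢ < ∞, and let (S_i(k))_{k∈ℕ} be i.i.d. Bernoulli random variables with ℙ(S_i(k) = 0) = P_e, where all arrival and service random variables across users and times are mutually independent. Fix ε > 0, set R_i = λ_i + ε, and assume 0 ≤ P_e ≤ ε/(2(max_i λ_i + ε)). Define the queue lengths at block boundaries by deterministic initial values Q_i(0) ≥ 0 and, for k ∈ ℕ, Q_i((k+1)n) = Q_i(kn) + Σ_{τ=kn}^{(k+1)n−1} A_i(τ) if Q_i(kn) < nR_i, and Q_i((k+1)n) = Q_i(kn) − nR_i·S_i(k) + Σ_{τ=kn}^{(k+1)n−1} A_i(τ) if Q_i(kn) ≥ nR_i. Then the system is strongly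 stable: limsup_{K→∞} (1/K)·Σ_{k=0}^{K−1} Σ_{i=1}^M 𝔼[Q_i(kn)] ≤ B/(nε), where B = Σ_{i=1}^M max{B′_i, B″_i}, with B′_i = n·m₂ᵢ + n(n−1)λ_i² + n²R_i²(1−P_e) − 2n²λ_iR_i(1−P_e) and B″_i = n²R_i(2λ_i + ε) + n·m₂ᵢ + n(n−1)λ_i². -/
open MeasureTheory ProbabilityTheory Filter Finset

section aux
variable {Ω : Type*} {mΩ : MeasurableSpace Ω} {μ : Measure Ω}

lemma indep_mono' {m1 m2 m1' m2' : MeasurableSpace Ω} (h : Indep m1 m2 μ)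
    (h1 : m1' ≤ m1) (h2 : m2' ≤ m2) : Indep m1' m2' μ := by
  rw [Indep_iff] at h ⊢
  exact fun t1 t2 ht1 ht2 => h t1 t2 (h1 _ ht1) (h2 _ ht2)

lemma mul_int' {f g : Ω → ℝ} (hf : MemLp f 2 μ) (hg : MemLp g 2 μ) :
    Integrable (fun ω => f ω * g ω) μ := by
  have h := memLp_one_iff_integrable.mp
    (hf.smul (r := 1) hg)
  have : g • f = fun ω => f ω * g ω := by funext ω; simp [smul_eq_mul, mul_comm]
  rwa [this] at h
end aux

set_option maxHeartbeats 1000000 in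
/-- Stability (achievability) half of the capacity-region/stability-region equivalence for the
MAC, at the level of the queueing scheme. `M` queues operate over blocks of `n` slots; user `i`
has i.i.d. nonnegative arrivals `A i τ` with mean `lam i` and second moment `m2 i`, and i.i.d.
Bernoulli decoding indicators `S i k` with failure probability `Pe`, all mutually independent.
With `R i = lam i + eps` and `Pe ≤ eps / (2 (max_i lam i + eps))`, user `i` transmits `n * R i`
units in block `k` iff its queue `Q i k` (the queue length at time `k n`) is at least `n * R i`.
Then the system is strongly stable:
`limsup_{K→∞} (1/K) ∑_{k<K} ∑ i, 𝔼[Q i k] ≤ B / (n eps)` where `B = ∑ i, max (B' i) (B'' i)`. -/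
theorem mac_threshold_scheme_strongly_stable
    {Ω : Type*} [MeasureSpace Ω] [IsProbabilityMeasure (ℙ : Measure Ω)]
    (M n : ℕ) (hM : 0 < M) (hn : 0 < n)
    (A : Fin M → ℕ → Ω → ℝ) (S : Fin M → ℕ → Ω → ℝ)
    (lam m2 R : Fin M → ℝ) (Pe eps : ℝ)
    (hA_meas : ∀ i τ, Measurable (A i τ)) (hS_meas : ∀ i k, Measurable (S i k))
    (hA_nonneg : ∀ i τ ω, 0 ≤ A i τ ω)
    (h_indep : iIndepFun
      (Sum.elim (fun p : Fin M × ℕ => A p.1 p.2) (fun p : Fin M × ℕ => S p.1 p.2)) ℙ)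
    (hA_ident : ∀ i, ∀ τ τ' : ℕ, IdentDistrib (A i τ) (A i τ') ℙ ℙ)
    (hA_int : ∀ i τ, Integrable (A i τ) ℙ)
    (hA_mean : ∀ i τ, ∫ ω, A i τ ω = lam i)
    (hA_sq_int : ∀ i τ, Integrable (fun ω => (A i τ ω) ^ 2) ℙ)
    (hA_sq : ∀ i τ, ∫ ω, (A i τ ω) ^ 2 = m2 i)
    (hS_val : ∀ i k ω, S i k ω = 0 ∨ S i k ω = 1)
    (hS_zero : ∀ i k, ℙ {ω | S i k ω = 0} = ENNReal.ofReal Pe)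
    (hlam : ∀ i, 0 ≤ lam i) (heps : 0 < eps) (hR : ∀ i, R i = lam i + eps)
    (hPe0 : 0 ≤ Pe)
    (hPe : Pe ≤ eps / (2 * ((Finset.univ.sup'
      (Finset.univ_nonempty_iff.mpr (Fin.pos_iff_nonempty.mp hM)) lam) + eps)))
    (Q0 : Fin M → ℝ) (hQ0 : ∀ i, 0 ≤ Q0 i)
    (Q : Fin M → ℕ → Ω → ℝ)
    (hQ_init : ∀ i ω, Q i 0 ω = Q0 i)
    (hQ_rec : ∀ i k ω, Q i (k + 1) ω =
      if Q i k ω < (n : ℝ) * R i then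
        Q i k ω + ∑ τ ∈ Finset.Ico (k * n) ((k + 1) * n), A i τ ω
      else
        Q i k ω - (n : ℝ) * R i * S i k ω + ∑ τ ∈ Finset.Ico (k * n) ((k + 1) * n), A i τ ω) :
    Filter.limsup (fun K : ℕ =>
        (1 / (K : ℝ)) * ∑ k ∈ Finset.range K, ∑ i, ∫ ω, Q i k ω) Filter.atTop
      ≤ (∑ i, max
          ((n : ℝ) * m2 i + (n : ℝ) * ((n : ℝ) - 1) * (lam i) ^ 2
            + (n : ℝ) ^ 2 * (R i) ^ 2 * (1 - Pe)
            - 2 * (n : ℝ) ^ 2 * lam i * R i * (1 - Pe))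
          ((n : ℝ) ^ 2 * R i * (2 * lam i + eps)
            + (n : ℝ) * m2 i + (n : ℝ) * ((n : ℝ) - 1) * (lam i) ^ 2))
        / ((n : ℝ) * eps) := by
  classical
  set L : ℝ := Finset.univ.sup'
    (Finset.univ_nonempty_iff.mpr (Fin.pos_iff_nonempty.mp hM)) lam with hLdef
  set f : (Fin M × ℕ) ⊕ (Fin M × ℕ) → Ω → ℝ :=
    Sum.elim (fun p : Fin M × ℕ => A p.1 p.2) (fun p : Fin M × ℕ => S p.1 p.2) with hfdef
  have hf_meas : ∀ j, Measurable (f j) := by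
    rintro (⟨i, τ⟩ | ⟨i, k⟩)
    · exact hA_meas i τ
    · exact hS_meas i k
  set mco : ((Fin M × ℕ) ⊕ (Fin M × ℕ)) → MeasurableSpace Ω :=
    fun j => MeasurableSpace.comap (f j) inferInstance with hmco
  set past : ℕ → Set ((Fin M × ℕ) ⊕ (Fin M × ℕ)) :=
    fun k => {j | Sum.elim (fun p : Fin M × ℕ => p.2 < k * n) (fun p : Fin M × ℕ => p.2 < k) j}
      with hpast
  set G : ℕ → MeasurableSpace Ω := fun k => ⨆ j ∈ past k, mco j with hG
  have hmco_le : ∀ j, mco j ≤ (inferInstance : MeasurableSpace Ω) := fun j =>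
    (hf_meas j).comap_le
  have hG_le : ∀ k, G k ≤ (inferInstance : MeasurableSpace Ω) := fun k =>
    iSup₂_le fun j _ => hmco_le j
  have hpast_mono : ∀ {k k' : ℕ}, k ≤ k' → past k ⊆ past k' := by
    intro k k' hkk
    rintro (⟨i, τ⟩ | ⟨i, l⟩) hj
    · exact lt_of_lt_of_le hj (Nat.mul_le_mul_right n hkk)
    · exact lt_of_lt_of_le hj hkk
  have hG_mono : ∀ {k k' : ℕ}, k ≤ k' → G k ≤ G k' := by
    intro k k' hkk
    exact biSup_mono (hpast_mono hkk)
  have h_indep' : iIndep mco ℙ := h_indep.iIndep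
  have hGindep : ∀ (k : ℕ) j, j ∉ past k → Indep (G k) (mco j) ℙ := by
    intro k j hj
    have h := indep_iSup_of_disjoint hmco_le h_indep'
      (S := past k) (T := {j}) (Set.disjoint_singleton_right.mpr hj)
    simpa using h
  -- measurability of Q i k w.r.t. G k
  have hQG : ∀ i k, Measurable[G k] (Q i k) := by
    intro i k
    induction k with
    | zero =>
      have h0 : Q i 0 = fun _ => Q0 i := funext (hQ_init i)
      rw [h0]; exact measurable_const
    | succ k ih =>
      have hQk : Measurable[G (k + 1)] (Q i k) := ih.mono (hG_mono (Nat.le_succ k)) le_rfl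
      have hAk : ∀ τ ∈ Finset.Ico (k * n) ((k + 1) * n), Measurable[G (k + 1)] (A i τ) := by
        intro τ hτ
        have hmem : (Sum.inl (i, τ) : (Fin M × ℕ) ⊕ (Fin M × ℕ)) ∈ past (k + 1) := by
          simp only [hpast, Set.mem_setOf_eq, Sum.elim_inl]
          exact (Finset.mem_Ico.mp hτ).2
        exact measurable_iff_comap_le.mpr (le_trans le_rfl (le_biSup mco hmem))
      have hSk : Measurable[G (k + 1)] (S i k) := by
        have hmem : (Sum.inr (i, k) : (Fin M × ℕ) ⊕ (Fin M × ℕ)) ∈ past (k + 1) := by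
          simp only [hpast, Set.mem_setOf_eq, Sum.elim_inr]
          exact Nat.lt_succ_self k
        exact measurable_iff_comap_le.mpr (le_biSup mco hmem)
      have hrw : Q i (k + 1) = fun ω =>
          if Q i k ω < (n : ℝ) * R i then
            Q i k ω + ∑ τ ∈ Finset.Ico (k * n) ((k + 1) * n), A i τ ω
          else
            Q i k ω - (n : ℝ) * R i * S i k ω + ∑ τ ∈ Finset.Ico (k * n) ((k + 1) * n), A i τ ω :=
        funext (hQ_rec i k)
      rw [hrw]
      have hsum : Measurable[G (k + 1)] fun ω => ∑ τ ∈ Finset.Ico (k * n) ((k + 1) * n), A i τ ω :=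
        Finset.measurable_sum _ hAk
      exact Measurable.ite (measurableSet_lt hQk measurable_const)
        (hQk.add hsum) ((hQk.sub (hSk.const_mul _)).add hsum)
  have hQ_meas : ∀ i k, Measurable (Q i k) := fun i k => (hQG i k).mono (hG_le k) le_rfl
  -- independence specializations
  have hIndepA : ∀ (k : ℕ) (g : Ω → ℝ), Measurable[G k] g → ∀ i τ, k * n ≤ τ →
      IndepFun g (A i τ) ℙ := by
    intro k g hg i τ hτ
    have hj : (Sum.inl (i, τ) : (Fin M × ℕ) ⊕ (Fin M × ℕ)) ∉ past k := by
      simp only [hpast, Set.mem_setOf_eq, Sum.elim_inl, not_lt]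
      exact hτ
    rw [IndepFun_iff_Indep]
    exact indep_mono' (hGindep k _ hj) (measurable_iff_comap_le.mp hg) le_rfl
  have hIndepS : ∀ (k : ℕ) (g : Ω → ℝ), Measurable[G k] g → ∀ i,
      IndepFun g (S i k) ℙ := by
    intro k g hg i
    have hj : (Sum.inr (i, k) : (Fin M × ℕ) ⊕ (Fin M × ℕ)) ∉ past k := by
      simp only [hpast, Set.mem_setOf_eq, Sum.elim_inr, not_lt]
      exact le_rfl
    rw [IndepFun_iff_Indep]
    exact indep_mono' (hGindep k _ hj) (measurable_iff_comap_le.mp hg) le_rfl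
  have hIndepAA : ∀ i (τ τ' : ℕ), τ ≠ τ' → IndepFun (A i τ) (A i τ') ℙ := by
    intro i τ τ' h
    exact h_indep.indepFun (i := Sum.inl (i, τ)) (j := Sum.inl (i, τ')) (by simp [h])
  -- basic S facts
  have hS01 : ∀ i k ω, 0 ≤ S i k ω ∧ S i k ω ≤ 1 := by
    intro i k ω; rcases hS_val i k ω with h | h <;> rw [h] <;> norm_num
  have hPe1 : Pe ≤ 1 := by
    have h := hS_zero ⟨0, hM⟩ 0
    have h1 : ENNReal.ofReal Pe ≤ 1 := h ▸ prob_le_one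
    exact ENNReal.ofReal_le_one.mp h1
  have hS_L2 : ∀ i k, MemLp (S i k) 2 ℙ := fun i k =>
    MemLp.of_bound (hS_meas i k).aestronglyMeasurable 1
      (Filter.Eventually.of_forall fun ω => by
        rw [Real.norm_eq_abs, abs_of_nonneg (hS01 i k ω).1]; exact (hS01 i k ω).2)
  have hS_int : ∀ i k, Integrable (S i k) ℙ := fun i k => (hS_L2 i k).integrable one_le_two
  have hS_mean : ∀ i k, ∫ ω, S i k ω = 1 - Pe := by
    intro i k
    have hmeas1 : MeasurableSet {ω | S i k ω = 1} := (hS_meas i k) (measurableSet_singleton 1)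
    have hmeas0 : MeasurableSet {ω | S i k ω = 0} := (hS_meas i k) (measurableSet_singleton 0)
    have hset : {ω | S i k ω = 1} = {ω | S i k ω = 0}ᶜ := by
      ext ω; rcases hS_val i k ω with h | h <;> simp [h]
    have hrepr : ∀ ω, S i k ω = Set.indicator {ω | S i k ω = 1} (fun _ => (1 : ℝ)) ω := by
      intro ω
      rcases hS_val i k ω with h | h
      · rw [h]
        exact (Set.indicator_of_notMem (by simp [Set.mem_setOf_eq, h]) _).symm
      · rw [h]
        exact (Set.indicator_of_mem (show ω ∈ {ω | S i k ω = 1} from h) (fun _ => (1 : ℝ))).symm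
    calc ∫ ω, S i k ω
        = ∫ ω, Set.indicator {ω | S i k ω = 1} (fun _ => (1 : ℝ)) ω :=
          integral_congr_ae (Filter.Eventually.of_forall hrepr)
      _ = (ℙ {ω | S i k ω = 1}).toReal • (1 : ℝ) := integral_indicator_const (1 : ℝ) hmeas1
      _ = 1 - Pe := by
          rw [hset, measure_compl hmeas0 (measure_ne_top _ _), measure_univ, hS_zero,
            smul_eq_mul, mul_one,
            ENNReal.toReal_sub_of_le (ENNReal.ofReal_le_one.mpr hPe1) ENNReal.one_ne_top,
            ENNReal.toReal_one, ENNReal.toReal_ofReal hPe0]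
  -- numeric basics
  have hn1 : (1 : ℝ) ≤ (n : ℝ) := by exact_mod_cast hn
  have hR_pos : ∀ i, 0 < R i := fun i => by rw [hR i]; linarith [hlam i]
  have hc_nonneg : ∀ i, 0 ≤ (n : ℝ) * R i := fun i =>
    mul_nonneg (by positivity) (hR_pos i).le
  -- pointwise bounds on Q
  have hQ_nonneg : ∀ i k ω, 0 ≤ Q i k ω := by
    intro i k
    induction k with
    | zero => intro ω; rw [hQ_init]; exact hQ0 i
    | succ k ih =>
      intro ω
      rw [hQ_rec]
      have hsum : 0 ≤ ∑ τ ∈ Finset.Ico (k * n) ((k + 1) * n), A i τ ω :=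
        Finset.sum_nonneg fun τ _ => hA_nonneg i τ ω
      split_ifs with h
      · linarith [ih ω]
      · push_neg at h
        have hs := hS01 i k ω
        have : (n : ℝ) * R i * S i k ω ≤ (n : ℝ) * R i * 1 :=
          mul_le_mul_of_nonneg_left hs.2 (hc_nonneg i)
        linarith
  have hQ_le : ∀ i k ω, Q i k ω ≤ Q0 i + ∑ τ ∈ Finset.range (k * n), A i τ ω := by
    intro i k
    induction k with
    | zero => intro ω; rw [hQ_init]; simp
    | succ k ih =>
      intro ω
      have hsplit : ∑ τ ∈ Finset.range ((k + 1) * n), A i τ ω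
          = ∑ τ ∈ Finset.range (k * n), A i τ ω
            + ∑ τ ∈ Finset.Ico (k * n) ((k + 1) * n), A i τ ω := by
        rw [Finset.range_eq_Ico, Finset.range_eq_Ico]
        exact (Finset.sum_Ico_consecutive _ (Nat.zero_le _)
          (Nat.mul_le_mul_right n (Nat.le_succ k))).symm
      rw [hQ_rec, hsplit]
      have hs := hS01 i k ω
      have hcs : 0 ≤ (n : ℝ) * R i * S i k ω := mul_nonneg (hc_nonneg i) hs.1
      split_ifs with h
      · linarith [ih ω]
      · linarith [ih ω]
  -- L² membership
  have hA_L2 : ∀ i τ, MemLp (A i τ) 2 ℙ := fun i τ =>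
    (memLp_two_iff_integrable_sq (hA_meas i τ).aestronglyMeasurable).mpr (hA_sq_int i τ)
  have hQ_L2 : ∀ i k, MemLp (Q i k) 2 ℙ := by
    intro i k
    have hD : MemLp (fun ω => Q0 i + ∑ τ ∈ Finset.range (k * n), A i τ ω) 2 ℙ := by
      have hsum2 := memLp_finset_sum' (Finset.range (k * n)) (fun τ _ => hA_L2 i τ)
      have he : (∑ τ ∈ Finset.range (k * n), A i τ)
          = fun ω => ∑ τ ∈ Finset.range (k * n), A i τ ω := by
        funext ω; simp
      rw [he] at hsum2
      exact (memLp_const (Q0 i)).add hsum2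
    refine hD.of_le (hQ_meas i k).aestronglyMeasurable
      (Filter.Eventually.of_forall fun ω => ?_)
    rw [Real.norm_eq_abs, Real.norm_eq_abs, abs_of_nonneg (hQ_nonneg i k ω)]
    exact le_trans (hQ_le i k ω) (le_abs_self _)
  have hQ_int : ∀ i k, Integrable (Q i k) ℙ := fun i k => (hQ_L2 i k).integrable one_le_two
  have hQsq_int : ∀ i k, Integrable (fun ω => Q i k ω ^ 2) ℙ := fun i k =>
    (hQ_L2 i k).integrable_sq
  -- block arrival sum statistics
  have hcard : ∀ k : ℕ, (Finset.Ico (k * n) ((k + 1) * n)).card = n := by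
    intro k; rw [Nat.card_Ico, Nat.succ_mul, Nat.add_sub_cancel_left]
  have hAA_int : ∀ i (τ τ' : ℕ), Integrable (fun ω => A i τ ω * A i τ' ω) ℙ :=
    fun i τ τ' => mul_int' (hA_L2 i τ) (hA_L2 i τ')
  have hAA : ∀ i (τ τ' : ℕ), ∫ ω, A i τ ω * A i τ' ω
      = if τ = τ' then m2 i else lam i ^ 2 := by
    intro i τ τ'
    by_cases h : τ = τ'
    · subst h; rw [if_pos rfl, ← hA_sq i τ]
      congr 1; funext ω; ring
    · rw [if_neg h, (hIndepAA i τ τ' h).integral_fun_mul_eq_mul_integral (hA_meas i τ).aestronglyMeasurable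
        (hA_meas i τ').aestronglyMeasurable, hA_mean, hA_mean, sq]
  have hX_L2 : ∀ i k, MemLp (fun ω => ∑ τ ∈ Finset.Ico (k*n) ((k+1)*n), A i τ ω) 2 ℙ := by
    intro i k
    have h := memLp_finset_sum' (Finset.Ico (k*n) ((k+1)*n)) (fun τ _ => hA_L2 i τ)
    have he : (∑ τ ∈ Finset.Ico (k*n) ((k+1)*n), A i τ)
        = fun ω => ∑ τ ∈ Finset.Ico (k*n) ((k+1)*n), A i τ ω := by funext ω; simp
    rwa [he] at h
  have hX2 : ∀ i k, ∫ ω, (∑ τ ∈ Finset.Ico (k*n) ((k+1)*n), A i τ ω)^2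
      = (n:ℝ) * m2 i + (n:ℝ) * ((n:ℝ) - 1) * lam i ^ 2 := by
    intro i k
    have h1 : (fun ω => (∑ τ ∈ Finset.Ico (k*n) ((k+1)*n), A i τ ω)^2)
        = fun ω => ∑ τ ∈ Finset.Ico (k*n) ((k+1)*n), ∑ τ' ∈ Finset.Ico (k*n) ((k+1)*n),
            A i τ ω * A i τ' ω := by
      funext ω; rw [sq, Finset.sum_mul_sum]
    have hinner : ∀ τ ∈ Finset.Ico (k*n) ((k+1)*n),
        (∑ τ' ∈ Finset.Ico (k*n) ((k+1)*n), if τ = τ' then m2 i else lam i ^ 2)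
          = (n:ℝ) * lam i ^ 2 + (m2 i - lam i ^ 2) := by
      intro τ hτ
      have h2 : ∀ τ', (if τ = τ' then m2 i else lam i ^ 2)
          = lam i ^ 2 + (if τ = τ' then m2 i - lam i ^ 2 else 0) := by
        intro τ'; split_ifs <;> ring
      rw [Finset.sum_congr rfl fun τ' _ => h2 τ', Finset.sum_add_distrib,
        Finset.sum_const, hcard, Finset.sum_ite_eq, if_pos hτ, nsmul_eq_mul]
    calc ∫ ω, (∑ τ ∈ Finset.Ico (k*n) ((k+1)*n), A i τ ω)^2
        = ∑ τ ∈ Finset.Ico (k*n) ((k+1)*n), ∫ ω, ∑ τ' ∈ Finset.Ico (k*n) ((k+1)*n),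
            A i τ ω * A i τ' ω := by
          rw [h1]
          exact integral_finset_sum _ fun τ _ =>
            integrable_finset_sum _ fun τ' _ => hAA_int i τ τ'
      _ = ∑ τ ∈ Finset.Ico (k*n) ((k+1)*n), ∑ τ' ∈ Finset.Ico (k*n) ((k+1)*n),
            ∫ ω, A i τ ω * A i τ' ω :=
          Finset.sum_congr rfl fun τ _ =>
            integral_finset_sum _ fun τ' _ => hAA_int i τ τ'
      _ = ∑ τ ∈ Finset.Ico (k*n) ((k+1)*n), ((n:ℝ) * lam i ^ 2 + (m2 i - lam i ^ 2)) := by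
          refine Finset.sum_congr rfl fun τ hτ => ?_
          rw [Finset.sum_congr rfl fun τ' _ => hAA i τ τ']
          exact hinner τ hτ
      _ = (n:ℝ) * m2 i + (n:ℝ) * ((n:ℝ) - 1) * lam i ^ 2 := by
          rw [Finset.sum_const, hcard, nsmul_eq_mul]; ring
  -- the drift inequality
  have hdrift : ∀ (i : Fin M) (k : ℕ), ∫ ω, (Q i (k+1) ω)^2
      ≤ (∫ ω, (Q i k ω)^2)
        + ((n:ℝ)^2 * R i * (2 * lam i + eps) + (n:ℝ) * m2 i + (n:ℝ)*((n:ℝ)-1)*lam i ^ 2)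
        - (n:ℝ) * eps * ∫ ω, Q i k ω := by
    intro i k
    set c : ℝ := (n:ℝ) * R i with hc
    set X : Ω → ℝ := fun ω => ∑ τ ∈ Finset.Ico (k*n) ((k+1)*n), A i τ ω with hXd
    set II : Ω → ℝ := fun ω => if c ≤ Q i k ω then (1:ℝ) else 0 with hII
    have hc0 : 0 ≤ c := hc_nonneg i
    have hII_G : Measurable[G k] II := by
      rw [hII]
      exact Measurable.ite (measurableSet_le measurable_const (hQG i k))
        measurable_const measurable_const
    have hII_meas : Measurable II := hII_G.mono (hG_le k) le_rfl
    have hII01 : ∀ ω, 0 ≤ II ω ∧ II ω ≤ 1 := by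
      intro ω; rw [hII]; dsimp only; split_ifs <;> norm_num
    have hII_L2 : MemLp II 2 ℙ :=
      MemLp.of_bound hII_meas.aestronglyMeasurable 1
        (Filter.Eventually.of_forall fun ω => by
          rw [Real.norm_eq_abs, abs_of_nonneg (hII01 ω).1]; exact (hII01 ω).2)
    have hII_int : Integrable II ℙ := hII_L2.integrable one_le_two
    have hQI_G : Measurable[G k] (fun ω => Q i k ω * II ω) := (hQG i k).mul hII_G
    have hQI_L2 : MemLp (fun ω => Q i k ω * II ω) 2 ℙ := by
      refine (hQ_L2 i k).of_le (hQI_G.mono (hG_le k) le_rfl).aestronglyMeasurable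
        (Filter.Eventually.of_forall fun ω => ?_)
      rw [Real.norm_eq_abs, Real.norm_eq_abs, abs_mul]
      calc |Q i k ω| * |II ω| ≤ |Q i k ω| * 1 := by
            apply mul_le_mul_of_nonneg_left _ (abs_nonneg _)
            rw [abs_of_nonneg (hII01 ω).1]; exact (hII01 ω).2
        _ = |Q i k ω| := mul_one _
    have hQI_int : Integrable (fun ω => Q i k ω * II ω) ℙ := hQI_L2.integrable one_le_two
    have hX_nonneg : ∀ ω, 0 ≤ X ω := fun ω => Finset.sum_nonneg fun τ _ => hA_nonneg i τ ω
    have hrec : ∀ ω, Q i (k+1) ω = Q i k ω + X ω - c * S i k ω * II ω := by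
      intro ω
      rw [hQ_rec i k ω]
      by_cases h : Q i k ω < c
      · rw [if_pos h, hII]; dsimp only; rw [if_neg (not_le.mpr h)]; ring
      · rw [if_neg h, hII]; dsimp only; rw [if_pos (not_lt.mp h)]; ring
    have hpt : ∀ ω, (Q i (k+1) ω)^2 ≤ (Q i k ω)^2 + (X ω)^2 + c^2 * (S i k ω * II ω)
        + 2 * (Q i k ω * X ω) - 2 * c * (S i k ω * (Q i k ω * II ω)) := by
      intro ω
      rw [hrec ω]
      have hs := hS01 i k ω
      have hii := hII01 ω
      have hs2 : S i k ω * S i k ω = S i k ω := by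
        rcases hS_val i k ω with h | h <;> rw [h] <;> ring
      have hi2 : II ω * II ω = II ω := by rw [hII]; dsimp only; split_ifs <;> ring
      have hsi : (S i k ω * II ω) * (S i k ω * II ω) = S i k ω * II ω := by
        rw [mul_mul_mul_comm, hs2, hi2]
      have hxc : 0 ≤ X ω * (c * (S i k ω * II ω)) :=
        mul_nonneg (hX_nonneg ω) (mul_nonneg hc0 (mul_nonneg hs.1 hii.1))
      nlinarith [hxc, hsi]
    -- integrability of all the pieces
    have hX2_int : Integrable (fun ω => X ω ^ 2) ℙ := (hX_L2 i k).integrable_sq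
    have hSI_int : Integrable (fun ω => S i k ω * II ω) ℙ := mul_int' (hS_L2 i k) hII_L2
    have hQX_int : Integrable (fun ω => Q i k ω * X ω) ℙ := mul_int' (hQ_L2 i k) (hX_L2 i k)
    have hSQI_int : Integrable (fun ω => S i k ω * (Q i k ω * II ω)) ℙ :=
      mul_int' (hS_L2 i k) hQI_L2
    have i1 : Integrable (fun ω => (Q i k ω)^2 + (X ω)^2) ℙ := (hQsq_int i k).add hX2_int
    have i2 : Integrable (fun ω => (Q i k ω)^2 + (X ω)^2 + c^2 * (S i k ω * II ω)) ℙ :=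
      i1.add (hSI_int.const_mul _)
    have i3 : Integrable (fun ω => (Q i k ω)^2 + (X ω)^2 + c^2 * (S i k ω * II ω)
        + 2 * (Q i k ω * X ω)) ℙ := i2.add (hQX_int.const_mul 2)
    have i4 : Integrable (fun ω => (Q i k ω)^2 + (X ω)^2 + c^2 * (S i k ω * II ω)
        + 2 * (Q i k ω * X ω) - 2 * c * (S i k ω * (Q i k ω * II ω))) ℙ :=
      i3.sub (hSQI_int.const_mul _)
    have hmono : ∫ ω, (Q i (k+1) ω)^2
        ≤ ∫ ω, ((Q i k ω)^2 + (X ω)^2 + c^2 * (S i k ω * II ω)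
            + 2 * (Q i k ω * X ω) - 2 * c * (S i k ω * (Q i k ω * II ω))) :=
      integral_mono (hQsq_int i (k+1)) i4 hpt
    have hTot : ∫ ω, ((Q i k ω)^2 + (X ω)^2 + c^2 * (S i k ω * II ω)
          + 2 * (Q i k ω * X ω) - 2 * c * (S i k ω * (Q i k ω * II ω)))
        = (∫ ω, (Q i k ω)^2) + (∫ ω, (X ω)^2) + c^2 * (∫ ω, S i k ω * II ω)
          + 2 * (∫ ω, Q i k ω * X ω) - 2 * c * (∫ ω, S i k ω * (Q i k ω * II ω)) := by
      rw [integral_sub i3 (hSQI_int.const_mul _), integral_add i2 (hQX_int.const_mul 2),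
        integral_add i1 (hSI_int.const_mul _), integral_add (hQsq_int i k) hX2_int,
        integral_const_mul, integral_const_mul, integral_const_mul]
    -- the independent-factor integrals
    have hQX : ∫ ω, Q i k ω * X ω = (∫ ω, Q i k ω) * ((n:ℝ) * lam i) := by
      calc ∫ ω, Q i k ω * X ω
          = ∫ ω, ∑ τ ∈ Finset.Ico (k*n) ((k+1)*n), Q i k ω * A i τ ω := by
            rw [hXd]; dsimp only; simp only [Finset.mul_sum]
        _ = ∑ τ ∈ Finset.Ico (k*n) ((k+1)*n), ∫ ω, Q i k ω * A i τ ω :=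
            integral_finset_sum _ fun τ _ => mul_int' (hQ_L2 i k) (hA_L2 i τ)
        _ = ∑ τ ∈ Finset.Ico (k*n) ((k+1)*n), (∫ ω, Q i k ω) * lam i := by
            refine Finset.sum_congr rfl fun τ hτ => ?_
            rw [(hIndepA k (Q i k) (hQG i k) i τ (Finset.mem_Ico.mp hτ).1).integral_fun_mul_eq_mul_integral
              (hQ_meas i k).aestronglyMeasurable (hA_meas i τ).aestronglyMeasurable,
              hA_mean]
        _ = (∫ ω, Q i k ω) * ((n:ℝ) * lam i) := by
            rw [Finset.sum_const, hcard, nsmul_eq_mul]; ring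
    have hSI : ∫ ω, S i k ω * II ω = (1 - Pe) * ∫ ω, II ω := by
      have h := (hIndepS k II hII_G i).integral_fun_mul_eq_mul_integral hII_meas.aestronglyMeasurable
        (hS_meas i k).aestronglyMeasurable
      calc ∫ ω, S i k ω * II ω = ∫ ω, II ω * S i k ω := by
            congr 1; funext ω; ring
        _ = (∫ ω, II ω) * ∫ ω, S i k ω := h
        _ = (1 - Pe) * ∫ ω, II ω := by rw [hS_mean]; ring
    have hSQI : ∫ ω, S i k ω * (Q i k ω * II ω) = (1 - Pe) * ∫ ω, Q i k ω * II ω := by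
      have h := (hIndepS k (fun ω => Q i k ω * II ω) hQI_G i).integral_fun_mul_eq_mul_integral
        (hQI_G.mono (hG_le k) le_rfl).aestronglyMeasurable (hS_meas i k).aestronglyMeasurable
      calc ∫ ω, S i k ω * (Q i k ω * II ω) = ∫ ω, (Q i k ω * II ω) * S i k ω := by
            congr 1; funext ω; ring
        _ = (∫ ω, Q i k ω * II ω) * ∫ ω, S i k ω := h
        _ = (1 - Pe) * ∫ ω, Q i k ω * II ω := by rw [hS_mean]; ring
    rw [hTot, hSI, hQX, hSQI, hX2 i k] at hmono
    refine le_trans hmono ?_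
    set q : ℝ := ∫ ω, Q i k ω with hq
    set u : ℝ := ∫ ω, Q i k ω * II ω with hu
    set p : ℝ := ∫ ω, II ω with hp
    have hu0 : 0 ≤ u := integral_nonneg fun ω => mul_nonneg (hQ_nonneg i k ω) (hII01 ω).1
    have hp0 : 0 ≤ p := integral_nonneg fun ω => (hII01 ω).1
    have hp1 : p ≤ 1 := by
      have h := integral_mono hII_int (integrable_const (1:ℝ)) (fun ω => (hII01 ω).2)
      simpa using h
    have hqu : q - u ≤ c * (1 - p) := by
      have hpt2 : ∀ ω, Q i k ω - Q i k ω * II ω ≤ c - c * II ω := by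
        intro ω
        rw [hII]; dsimp only
        split_ifs with h
        · simp
        · push_neg at h
          simp only [mul_zero]
          linarith
      have h : ∫ ω, (Q i k ω - Q i k ω * II ω) ≤ ∫ ω, (c - c * II ω) :=
        integral_mono ((hQ_int i k).sub hQI_int)
          ((integrable_const c).sub (hII_int.const_mul c)) hpt2
      rw [integral_sub (hQ_int i k) hQI_int,
        integral_sub (integrable_const c) (hII_int.const_mul c),
        integral_const, integral_const_mul] at h
      simpa [mul_comm, mul_sub] using h
    -- coefficient inequality from the error-probability bound
    have hLmax : lam i ≤ L := hLdef ▸ Finset.le_sup' lam (Finset.mem_univ i)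
    have hL0 : 0 ≤ L := le_trans (hlam i) hLmax
    have hPe' : Pe * (2 * (L + eps)) ≤ eps := by
      have hpos : (0:ℝ) < 2 * (L + eps) := by linarith
      calc Pe * (2 * (L + eps)) ≤ (eps / (2 * (L + eps))) * (2 * (L + eps)) :=
            mul_le_mul_of_nonneg_right hPe hpos.le
        _ = eps := div_mul_cancel₀ _ (ne_of_gt hpos)
    have h1 : (lam i + eps) * Pe ≤ eps / 2 := by nlinarith [hPe', hPe0, hLmax]
    have hcc : c = (n:ℝ) * (lam i + eps) := by rw [hc, hR i]
    have hkey : 2 * (n:ℝ) * lam i + (n:ℝ) * eps ≤ 2 * (c * (1 - Pe)) := by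
      have h2 : (n:ℝ) * ((lam i + eps) * Pe) ≤ (n:ℝ) * (eps / 2) :=
        mul_le_mul_of_nonneg_left h1 (by positivity)
      rw [hcc]; nlinarith [h2]
    have ha0 : (0:ℝ) ≤ 2 * (n:ℝ) * lam i + (n:ℝ) * eps := by
      have := hlam i
      have h3 : 0 ≤ 2 * (n:ℝ) * lam i := by positivity
      nlinarith
    have hca : c ≤ 2 * (n:ℝ) * lam i + (n:ℝ) * eps := by
      rw [hcc]
      have := hlam i
      nlinarith
    have hstep1 : (2*(n:ℝ)*lam i + (n:ℝ)*eps) * q - 2*c*((1-Pe)*u)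
        ≤ (2*(n:ℝ)*lam i + (n:ℝ)*eps) * (c*(1-p)) := by
      nlinarith [mul_le_mul_of_nonneg_left hqu ha0,
        mul_nonneg hu0 (by linarith [hkey] :
          (0:ℝ) ≤ 2*(c*(1-Pe)) - (2*(n:ℝ)*lam i + (n:ℝ)*eps))]
    have hstep2 : c^2*((1-Pe)*p) ≤ (2*(n:ℝ)*lam i + (n:ℝ)*eps) * (c * p) := by
      nlinarith [mul_nonneg (mul_nonneg (mul_nonneg hc0 hc0) hp0) hPe0,
        mul_le_mul_of_nonneg_right hca (mul_nonneg hc0 hp0)]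
    rw [hc] at hstep1 hstep2 ⊢
    nlinarith [hstep1, hstep2]
  -- telescoping
  set Bi : Fin M → ℝ := fun i => (n:ℝ)^2*R i*(2*lam i+eps) + (n:ℝ)*m2 i
    + (n:ℝ)*((n:ℝ)-1)*lam i^2 with hBi
  set BB : ℝ := ∑ i, Bi i with hBB
  set W : ℕ → ℝ := fun k => ∑ i, ∫ ω, (Q i k ω)^2 with hW
  set gg : ℕ → ℝ := fun k => ∑ i, ∫ ω, Q i k ω with hgg
  have hW0 : ∀ k, 0 ≤ W k := fun k =>
    Finset.sum_nonneg fun i _ => integral_nonneg fun ω => sq_nonneg _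
  have hg0 : ∀ k, 0 ≤ gg k := fun k =>
    Finset.sum_nonneg fun i _ => integral_nonneg fun ω => hQ_nonneg i k ω
  have hneps : 0 < (n:ℝ) * eps := mul_pos (by linarith) heps
  have hstep : ∀ k, W (k+1) ≤ W k + BB - (n:ℝ)*eps * gg k := by
    intro k
    calc W (k+1) ≤ ∑ i, ((∫ ω, (Q i k ω)^2) + Bi i - (n:ℝ)*eps*∫ ω, Q i k ω) :=
          Finset.sum_le_sum fun i _ => hdrift i k
      _ = W k + BB - (n:ℝ)*eps*gg k := by
          rw [hW, hgg, hBB]; dsimp only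
          rw [Finset.sum_sub_distrib, Finset.sum_add_distrib, Finset.mul_sum]
  have htel : ∀ K : ℕ, (n:ℝ)*eps * ∑ k ∈ Finset.range K, gg k ≤ W 0 + (K:ℝ) * BB - W K := by
    intro K
    induction K with
    | zero => simp
    | succ K ih =>
      rw [Finset.sum_range_succ, mul_add]
      have h := hstep K
      push_cast
      push_cast at ih
      linarith
  have hbound : ∀ K : ℕ, 1 ≤ K → (1/(K:ℝ)) * ∑ k ∈ Finset.range K, gg k
      ≤ W 0 / ((K:ℝ) * ((n:ℝ)*eps)) + BB / ((n:ℝ)*eps) := by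
    intro K hK
    have hK0 : (0:ℝ) < K := by exact_mod_cast hK
    have h2 : ∑ k ∈ Finset.range K, gg k ≤ (W 0 + (K:ℝ) * BB) / ((n:ℝ)*eps) := by
      rw [le_div_iff₀ hneps]
      have h := htel K
      have h3 := hW0 K
      linarith [mul_comm ((n:ℝ)*eps) (∑ k ∈ Finset.range K, gg k)]
    calc (1/(K:ℝ)) * ∑ k ∈ Finset.range K, gg k
        ≤ (1/(K:ℝ)) * ((W 0 + (K:ℝ)*BB)/((n:ℝ)*eps)) :=
          mul_le_mul_of_nonneg_left h2 (by positivity)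
      _ = W 0 / ((K:ℝ)*((n:ℝ)*eps)) + BB/((n:ℝ)*eps) := by
          field_simp
  have hTend : Tendsto (fun K : ℕ => W 0 / ((K:ℝ)*((n:ℝ)*eps)) + BB/((n:ℝ)*eps)) atTop
      (nhds (0 + BB/((n:ℝ)*eps))) := by
    refine Tendsto.add ?_ tendsto_const_nhds
    have heq : (fun K : ℕ => W 0 / ((K:ℝ)*((n:ℝ)*eps)))
        = fun K : ℕ => (W 0 /((n:ℝ)*eps)) * (1/(K:ℝ)) := by
      funext K
      rw [div_mul_eq_div_div_swap, div_div]
      ring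
    rw [heq]
    simpa using tendsto_one_div_atTop_nhds_zero_nat.const_mul (W 0 /((n:ℝ)*eps))
  have hlim2 : Filter.limsup (fun K : ℕ => W 0 / ((K:ℝ)*((n:ℝ)*eps)) + BB/((n:ℝ)*eps)) atTop
      = 0 + BB / ((n:ℝ)*eps) := hTend.limsup_eq
  have hlimsup : Filter.limsup (fun K : ℕ => (1/(K:ℝ)) * ∑ k ∈ Finset.range K, gg k) atTop
      ≤ BB / ((n:ℝ)*eps) := by
    have hle : ∀ᶠ K : ℕ in atTop, (1/(K:ℝ)) * ∑ k ∈ Finset.range K, gg k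
        ≤ W 0 / ((K:ℝ)*((n:ℝ)*eps)) + BB/((n:ℝ)*eps) :=
      Filter.eventually_atTop.mpr ⟨1, fun K hK => hbound K hK⟩
    have hcob : Filter.IsCoboundedUnder (· ≤ ·) Filter.atTop
        (fun K : ℕ => (1/(K:ℝ)) * ∑ k ∈ Finset.range K, gg k) :=
      Filter.isCoboundedUnder_le_of_eventually_le Filter.atTop (x := 0)
        (Filter.Eventually.of_forall fun K =>
          mul_nonneg (by positivity) (Finset.sum_nonneg fun k _ => hg0 k))
    have hbdd := hTend.isBoundedUnder_le
    calc Filter.limsup (fun K : ℕ => (1/(K:ℝ)) * ∑ k ∈ Finset.range K, gg k) atTop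
        ≤ Filter.limsup (fun K : ℕ => W 0 / ((K:ℝ)*((n:ℝ)*eps)) + BB/((n:ℝ)*eps)) atTop :=
          Filter.limsup_le_limsup hle hcob hbdd
      _ = 0 + BB / ((n:ℝ)*eps) := hlim2
      _ = BB / ((n:ℝ)*eps) := zero_add _
  refine le_trans hlimsup ?_
  exact (div_le_div_iff_of_pos_right hneps).mpr
    (by rw [hBB]; exact Finset.sum_le_sum fun i _ => le_max_right _ _)
end

section
/- Fix N₀ > 0, M ∈ ℕ, positive powers P_i, and a nonnegative weight vector w ∈ ℝ^M. Let H = (H_1,…,H_M) be a random vector of nonnegative channel gains such that 𝔼[(1/2)·log(1 + (Σ_{i∈S} H_iP_i)/N₀)] < ∞ for every S ⊆ {1,…,M}. Then the greedy policy is optimal for the linear utility u(R) = Σ_i w_iR_i: 𝔼[ max { Σ_i w_i r_i : r ∈ C_g(P,H) } ] = max { Σ_i w_iR_i : R ∈ C_a(P) }, where C_g(P,h) = { r ∈ ℝ^M_+ : Σ_{i∈S} r_i ≤ (1/2)·log(1 + (Σ_{i∈S} h_iP_i)/N₀) for all S ⊆ {1,…,M} } is the instantaneous capacity region and C_a(P)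 = { R ∈ ℝ^M_+ : Σ_{i∈S} R_i ≤ 𝔼[(1/2)·log(1 + (Σ_{i∈S} H_iP_i)/N₀)] for all S ⊆ {1,…,M} } is the throughput capacity region. -/
open MeasureTheory ProbabilityTheory Finset


namespace GreedyMAC

variable {M : ℕ}

def Aset (σ : Equiv.Perm (Fin M)) (k : ℕ) : Finset (Fin M) :=
  Finset.univ.filter fun j => (σ.symm j : ℕ) < k

lemma mem_Aset {σ : Equiv.Perm (Fin M)} {k : ℕ} {j : Fin M} :
    j ∈ Aset σ k ↔ (σ.symm j : ℕ) < k := by simp [Aset]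

lemma Aset_zero (σ : Equiv.Perm (Fin M)) : Aset σ 0 = ∅ := by
  ext j; simp [mem_Aset]

lemma Aset_univ (σ : Equiv.Perm (Fin M)) {k : ℕ} (hk : M ≤ k) : Aset σ k = Finset.univ := by
  ext j
  simp only [mem_Aset, Finset.mem_univ, iff_true]
  exact lt_of_lt_of_le (σ.symm j).isLt hk

lemma Aset_mono (σ : Equiv.Perm (Fin M)) {k l : ℕ} (h : k ≤ l) : Aset σ k ⊆ Aset σ l :=
  fun j hj => mem_Aset.2 (lt_of_lt_of_le (mem_Aset.1 hj) h)

lemma not_mem_Aset (σ : Equiv.Perm (Fin M)) {k : ℕ} (hk : k < M) :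
    σ ⟨k, hk⟩ ∉ Aset σ k := by simp [mem_Aset]

lemma Aset_succ (σ : Equiv.Perm (Fin M)) {k : ℕ} (hk : k < M) :
    Aset σ (k + 1) = insert (σ ⟨k, hk⟩) (Aset σ k) := by
  ext j
  simp only [mem_Aset, Finset.mem_insert, Nat.lt_succ_iff_lt_or_eq]
  constructor
  · rintro (h | h)
    · exact Or.inr h
    · left
      have : σ.symm j = ⟨k, hk⟩ := Fin.ext h
      rw [← this, Equiv.apply_symm_apply]
  · rintro (h | h)
    · right
      rw [h, Equiv.symm_apply_apply]
    · exact Or.inl h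

noncomputable def cw (w : Fin M → ℝ) (σ : Equiv.Perm (Fin M)) (k : ℕ) : ℝ :=
  if h : k < M then w (σ ⟨k, h⟩) else 0

lemma cw_nonneg {w : Fin M → ℝ} (hw : ∀ i, 0 ≤ w i) (σ : Equiv.Perm (Fin M)) (k : ℕ) :
    0 ≤ cw w σ k := by
  unfold cw; split <;> simp [hw]

lemma cw_M (w : Fin M → ℝ) (σ : Equiv.Perm (Fin M)) : cw w σ M = 0 := by
  simp [cw]

lemma cw_step_nonneg {w : Fin M → ℝ} (hw : ∀ i, 0 ≤ w i) {σ : Equiv.Perm (Fin M)}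
    (hσ : Antitone (w ∘ σ)) (k : ℕ) : 0 ≤ cw w σ k - cw w σ (k + 1) := by
  unfold cw
  split
  · next h1 =>
    split
    · next h2 =>
      have := hσ (show (⟨k, h1⟩ : Fin M) ≤ ⟨k+1, h2⟩ by simp [Fin.le_def])
      simpa using this
    · simp [hw]
  · next h1 =>
    have : ¬ (k + 1 < M) := fun h => h1 (Nat.lt_of_succ_lt h)
    simp [this]

lemma abel_id (c G : ℕ → ℝ) (M : ℕ) (hc : c M = 0) (hG : G 0 = 0) :
    ∑ k ∈ Finset.range M, c k * (G (k + 1) - G k)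
      = ∑ k ∈ Finset.range M, (c k - c (k + 1)) * G (k + 1) := by
  have key : ∑ k ∈ Finset.range M, (c (k+1) * G (k+1) - c k * G k) = 0 := by
    rw [Finset.sum_range_sub (fun k => c k * G k)]
    simp [hc, hG]
  have h : ∀ k, c k * (G (k + 1) - G k)
      = (c k - c (k + 1)) * G (k + 1) + (c (k+1) * G (k+1) - c k * G k) := by
    intro k; ring
  simp_rw [h]
  rw [Finset.sum_add_distrib, key, add_zero]

end GreedyMAC

namespace GreedyMAC
variable {M : ℕ}

lemma isGreatest_poly (w : Fin M → ℝ) (hw : ∀ i, 0 ≤ w i)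
    (σ : Equiv.Perm (Fin M)) (hσ : Antitone (w ∘ σ))
    (f : Finset (Fin M) → ℝ) (hf0 : f ∅ = 0)
    (hmono : ∀ A B : Finset (Fin M), A ⊆ B → f A ≤ f B)
    (hsub : ∀ A B : Finset (Fin M), ∀ j, A ⊆ B → j ∉ B →
      f (insert j B) - f B ≤ f (insert j A) - f A) :
    IsGreatest ((fun r : Fin M → ℝ => ∑ i, w i * r i) ''
        {r : Fin M → ℝ | (∀ i, 0 ≤ r i) ∧ ∀ S : Finset (Fin M), ∑ i ∈ S, r i ≤ f S})
      (∑ k ∈ Finset.range M, cw w σ k * (f (Aset σ (k + 1)) - f (Aset σ k))) := by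
  constructor
  · -- membership : greedy vertex
    set r : Fin M → ℝ :=
      fun j => f (Aset σ ((σ.symm j : ℕ) + 1)) - f (Aset σ (σ.symm j)) with hr
    refine ⟨r, ⟨?_, ?_⟩, ?_⟩
    · intro j
      have := hmono _ _ (Aset_mono σ (Nat.le_succ (σ.symm j : ℕ)))
      simp only [hr]
      linarith
    · -- polymatroid constraints
      intro S
      have claim : ∀ k : ℕ, ∑ j ∈ S ∩ Aset σ k, r j ≤ f (S ∩ Aset σ k) := by
        intro k
        induction k with
        | zero => simp [Aset_zero, hf0]
        | succ k ih =>
          by_cases hk : k < M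
          · rw [Aset_succ σ hk]
            set j0 := σ ⟨k, hk⟩ with hj0
            by_cases hj0S : j0 ∈ S
            · have hins : S ∩ insert j0 (Aset σ k) = insert j0 (S ∩ Aset σ k) := by
                rw [Finset.inter_comm, Finset.insert_inter_of_mem hj0S, Finset.inter_comm]
              rw [hins]
              have hj0nT : j0 ∉ S ∩ Aset σ k := fun h =>
                not_mem_Aset σ hk (Finset.mem_of_mem_inter_right h)
              rw [Finset.sum_insert hj0nT]
              have hrj0 : r j0 = f (Aset σ (k + 1)) - f (Aset σ k) := by
                simp [hr, hj0, Equiv.symm_apply_apply]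
              have hs := hsub (S ∩ Aset σ k) (Aset σ k) j0 Finset.inter_subset_right
                (not_mem_Aset σ hk)
              rw [← Aset_succ σ hk] at hs
              linarith
            · have hins : S ∩ insert j0 (Aset σ k) = S ∩ Aset σ k := by
                rw [Finset.inter_comm, Finset.insert_inter_of_notMem hj0S, Finset.inter_comm]
              rw [hins]; exact ih
          · have : Aset σ (k + 1) = Aset σ k := by
              rw [Aset_univ σ (Nat.le_of_not_lt hk),
                Aset_univ σ (Nat.le_succ_of_le (Nat.le_of_not_lt hk))]
            rw [this]; exact ih
      have := claim M
      rwa [Aset_univ σ le_rfl, Finset.inter_univ] at this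
    · -- value of greedy vertex
      show ∑ i, w i * r i = ∑ k ∈ Finset.range M, cw w σ k * (f (Aset σ (k + 1)) - f (Aset σ k))
      rw [show ∑ i, w i * r i = ∑ k : Fin M, w (σ k) * r (σ k) from
        (Equiv.sum_comp σ (fun i => w i * r i)).symm]
      have h2 : ∀ k : Fin M, w (σ k) * r (σ k)
          = cw w σ (k : ℕ) * (f (Aset σ ((k : ℕ) + 1)) - f (Aset σ (k : ℕ))) := by
        intro k
        simp [hr, cw, k.isLt, Equiv.symm_apply_apply, Fin.eta]
      simp_rw [h2]
      exact Fin.sum_univ_eq_sum_range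
        (fun k => cw w σ k * (f (Aset σ (k + 1)) - f (Aset σ k))) M
  · -- upper bound
    rintro x ⟨r, ⟨hr0, hrS⟩, rfl⟩
    set Rs : ℕ → ℝ := fun k => ∑ j ∈ Aset σ k, r j with hRs
    have hRs0 : Rs 0 = 0 := by simp [hRs, Aset_zero]
    have h1 : ∑ i, w i * r i = ∑ k ∈ Finset.range M, cw w σ k * (Rs (k + 1) - Rs k) := by
      rw [show (∑ i, w i * r i) = ∑ k : Fin M, w (σ k) * r (σ k) from
        (Equiv.sum_comp σ (fun i => w i * r i)).symm]
      have h2 : ∀ k : Fin M, w (σ k) * r (σ k)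
          = cw w σ (k : ℕ) * (Rs ((k : ℕ) + 1) - Rs (k : ℕ)) := by
        intro k
        have hstep : Rs ((k : ℕ) + 1) - Rs (k : ℕ) = r (σ k) := by
          simp only [hRs]
          rw [Aset_succ σ k.isLt, Finset.sum_insert (not_mem_Aset σ k.isLt)]
          simp [Fin.eta]
        rw [hstep]
        simp [cw, k.isLt, Fin.eta]
      simp_rw [h2]
      exact Fin.sum_univ_eq_sum_range
        (fun k => cw w σ k * (Rs (k + 1) - Rs k)) M
    show ∑ i, w i * r i ≤ ∑ k ∈ Finset.range M, cw w σ k * (f (Aset σ (k + 1)) - f (Aset σ k))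
    have e2 : ∑ k ∈ Finset.range M, cw w σ k * (f (Aset σ (k + 1)) - f (Aset σ k))
        = ∑ k ∈ Finset.range M, (cw w σ k - cw w σ (k + 1)) * f (Aset σ (k + 1)) :=
      abel_id (cw w σ) (fun k => f (Aset σ k)) M (cw_M w σ) (by simp [Aset_zero, hf0])
    rw [h1, abel_id _ _ M (cw_M w σ) hRs0, e2]
    apply Finset.sum_le_sum
    intro k _
    have hcoef := cw_step_nonneg hw hσ k
    have hle : Rs (k + 1) ≤ f (Aset σ (k + 1)) := hrS _
    exact mul_le_mul_of_nonneg_left hle hcoef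

end GreedyMAC

namespace GreedyMAC
variable {M : ℕ}

lemma log_sub_key {x y c : ℝ} (hx : 0 < x) (hxy : x ≤ y) (hc : 0 ≤ c) :
    Real.log (y + c) - Real.log y ≤ Real.log (x + c) - Real.log x := by
  have hy : 0 < y := lt_of_lt_of_le hx hxy
  rw [sub_le_sub_iff, ← Real.log_mul (by positivity) (by positivity),
    ← Real.log_mul (by positivity) (by positivity)]
  apply Real.log_le_log (by positivity)
  nlinarith

lemma log_form {N0 s : ℝ} (hN0 : 0 < N0) (hs : 0 ≤ s) :
    (1 / 2 : ℝ) * Real.log (1 + s / N0) = (1 / 2) * (Real.log (N0 + s) - Real.log N0) := by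
  rw [show (1 : ℝ) + s / N0 = (N0 + s) / N0 by field_simp,
    Real.log_div (by positivity) (by positivity)]

lemma phi_mono {N0 : ℝ} (hN0 : 0 < N0) (a : Fin M → ℝ) (ha : ∀ i, 0 ≤ a i)
    {A B : Finset (Fin M)} (hAB : A ⊆ B) :
    (1 / 2 : ℝ) * Real.log (1 + (∑ i ∈ A, a i) / N0)
      ≤ (1 / 2) * Real.log (1 + (∑ i ∈ B, a i) / N0) := by
  have hsum : ∑ i ∈ A, a i ≤ ∑ i ∈ B, a i :=
    Finset.sum_le_sum_of_subset_of_nonneg hAB (fun i _ _ => ha i)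
  have hApos : 0 ≤ ∑ i ∈ A, a i := Finset.sum_nonneg fun i _ => ha i
  have h : Real.log (1 + (∑ i ∈ A, a i) / N0) ≤ Real.log (1 + (∑ i ∈ B, a i) / N0) := by
    apply Real.log_le_log (by positivity)
    gcongr
  linarith

lemma phi_sub {N0 : ℝ} (hN0 : 0 < N0) (a : Fin M → ℝ) (ha : ∀ i, 0 ≤ a i)
    {A B : Finset (Fin M)} (j : Fin M) (hAB : A ⊆ B) (hjB : j ∉ B) :
    (1 / 2 : ℝ) * Real.log (1 + (∑ i ∈ insert j B, a i) / N0)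
        - (1 / 2) * Real.log (1 + (∑ i ∈ B, a i) / N0)
      ≤ (1 / 2) * Real.log (1 + (∑ i ∈ insert j A, a i) / N0)
        - (1 / 2) * Real.log (1 + (∑ i ∈ A, a i) / N0) := by
  have hjA : j ∉ A := fun h => hjB (hAB h)
  rw [Finset.sum_insert hjA, Finset.sum_insert hjB]
  have hApos : 0 ≤ ∑ i ∈ A, a i := Finset.sum_nonneg fun i _ => ha i
  have hsum : ∑ i ∈ A, a i ≤ ∑ i ∈ B, a i :=
    Finset.sum_le_sum_of_subset_of_nonneg hAB (fun i _ _ => ha i)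
  have hBpos : 0 ≤ ∑ i ∈ B, a i := Finset.sum_nonneg fun i _ => ha i
  rw [log_form hN0 (add_nonneg (ha j) hBpos), log_form hN0 hBpos,
    log_form hN0 (add_nonneg (ha j) hApos), log_form hN0 hApos]
  have key := log_sub_key (x := N0 + ∑ i ∈ A, a i) (y := N0 + ∑ i ∈ B, a i) (c := a j)
    (by positivity) (by linarith) (ha j)
  have e1 : N0 + (a j + ∑ i ∈ B, a i) = (N0 + ∑ i ∈ B, a i) + a j := by ring
  have e2 : N0 + (a j + ∑ i ∈ A, a i) = (N0 + ∑ i ∈ A, a i) + a j := by ring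
  rw [e1, e2]
  linarith

end GreedyMAC


/-- For a fading Gaussian MAC with fixed powers `P i`, noise power `N0` and random fading
vector `H`, the greedy rate allocation policy is optimal for a linear utility
`u(R) = ∑ i, w i * R i`: the expectation over the fading of the maximum of the utility over
the instantaneous capacity region `Cg (H ω)` equals the maximum of the utility over the
throughput capacity region `Ca`. -/
theorem greedy_optimal_for_linear_utility
    {Ω : Type*} [MeasureSpace Ω] [IsProbabilityMeasure (ℙ : Measure Ω)]
    (M : ℕ) (N0 : ℝ) (hN0 : 0 < N0)
    (P : Fin M → ℝ) (hP : ∀ i, 0 < P i)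
    (w : Fin M → ℝ) (hw : ∀ i, 0 ≤ w i)
    (H : Ω → Fin M → ℝ) (hH_meas : Measurable H) (hH_nonneg : ∀ ω i, 0 ≤ H ω i)
    (h_int : ∀ S : Finset (Fin M), Integrable
      (fun ω => (1 / 2) * Real.log (1 + (∑ i ∈ S, H ω i * P i) / N0)) ℙ)
    (Cg : (Fin M → ℝ) → Set (Fin M → ℝ))
    (hCg : ∀ h : Fin M → ℝ, Cg h = {r : Fin M → ℝ | (∀ i, 0 ≤ r i) ∧
      ∀ S : Finset (Fin M),
        ∑ i ∈ S, r i ≤ (1 / 2) * Real.log (1 + (∑ i ∈ S, h i * P i) / N0)})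
    (Ca : Set (Fin M → ℝ))
    (hCa : Ca = {R : Fin M → ℝ | (∀ i, 0 ≤ R i) ∧
      ∀ S : Finset (Fin M),
        ∑ i ∈ S, R i ≤ ∫ ω, (1 / 2) * Real.log (1 + (∑ i ∈ S, H ω i * P i) / N0)}) :
    ∫ ω, sSup ((fun r : Fin M → ℝ => ∑ i, w i * r i) '' Cg (H ω)) =
      sSup ((fun R : Fin M → ℝ => ∑ i, w i * R i) '' Ca) := by
  classical
  set σ : Equiv.Perm (Fin M) := Tuple.sort (fun i => -w i) with hσdef
  have hσ : Antitone (w ∘ σ) := by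
    intro a b hab
    have := Tuple.monotone_sort (fun i => -w i) hab
    simp only [Function.comp_apply] at this ⊢
    linarith
  -- pointwise instantaneous rank function
  have hgmono : ∀ ω, ∀ A B : Finset (Fin M), A ⊆ B →
      (1 / 2 : ℝ) * Real.log (1 + (∑ i ∈ A, H ω i * P i) / N0)
        ≤ (1 / 2) * Real.log (1 + (∑ i ∈ B, H ω i * P i) / N0) :=
    fun ω A B hAB => GreedyMAC.phi_mono hN0 (fun i => H ω i * P i)
      (fun i => mul_nonneg (hH_nonneg ω i) (hP i).le) hAB
  have hgsub : ∀ ω, ∀ A B : Finset (Fin M), ∀ j, A ⊆ B → j ∉ B →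
      (1 / 2 : ℝ) * Real.log (1 + (∑ i ∈ insert j B, H ω i * P i) / N0)
          - (1 / 2) * Real.log (1 + (∑ i ∈ B, H ω i * P i) / N0)
        ≤ (1 / 2) * Real.log (1 + (∑ i ∈ insert j A, H ω i * P i) / N0)
          - (1 / 2) * Real.log (1 + (∑ i ∈ A, H ω i * P i) / N0) :=
    fun ω A B j hAB hjB => GreedyMAC.phi_sub hN0 (fun i => H ω i * P i)
      (fun i => mul_nonneg (hH_nonneg ω i) (hP i).le) j hAB hjB
  have hg0 : ∀ ω, (1 / 2 : ℝ) * Real.log (1 + (∑ i ∈ (∅ : Finset (Fin M)), H ω i * P i) / N0)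
      = 0 := by intro ω; simp
  -- averaged rank function
  set F : Finset (Fin M) → ℝ :=
    fun S => ∫ ω, (1 / 2) * Real.log (1 + (∑ i ∈ S, H ω i * P i) / N0) with hFdef
  have hF0 : F ∅ = 0 := by
    rw [hFdef]
    simp only [Finset.sum_empty, zero_div, add_zero, Real.log_one, mul_zero]
    exact integral_zero _ _
  have hFmono : ∀ A B : Finset (Fin M), A ⊆ B → F A ≤ F B := fun A B hAB =>
    integral_mono (h_int A) (h_int B) (fun ω => hgmono ω A B hAB)
  have hFsub : ∀ A B : Finset (Fin M), ∀ j, A ⊆ B → j ∉ B →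
      F (insert j B) - F B ≤ F (insert j A) - F A := by
    intro A B j hAB hjB
    rw [hFdef]
    simp only
    rw [← integral_sub (h_int _) (h_int _), ← integral_sub (h_int _) (h_int _)]
    exact integral_mono ((h_int _).sub (h_int _)) ((h_int _).sub (h_int _))
      (fun ω => hgsub ω A B j hAB hjB)
  -- pointwise value of the inner sup (greedy policy value)
  have hpt : ∀ ω, sSup ((fun r : Fin M → ℝ => ∑ i, w i * r i) '' Cg (H ω))
      = ∑ k ∈ Finset.range M, GreedyMAC.cw w σ k *
          ((1 / 2) * Real.log (1 + (∑ i ∈ GreedyMAC.Aset σ (k + 1), H ω i * P i) / N0)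
            - (1 / 2) * Real.log (1 + (∑ i ∈ GreedyMAC.Aset σ k, H ω i * P i) / N0)) := by
    intro ω
    rw [hCg]
    exact (GreedyMAC.isGreatest_poly w hw σ hσ
      (fun S => (1 / 2) * Real.log (1 + (∑ i ∈ S, H ω i * P i) / N0))
      (hg0 ω) (fun A B h => hgmono ω A B h)
      (fun A B j h1 h2 => hgsub ω A B j h1 h2)).csSup_eq
  rw [integral_congr_ae (Filter.Eventually.of_forall hpt)]
  have hint2 : ∀ k ∈ Finset.range M, Integrable (fun ω =>
      GreedyMAC.cw w σ k *
        ((1 / 2) * Real.log (1 + (∑ i ∈ GreedyMAC.Aset σ (k + 1), H ω i * P i) / N0)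
          - (1 / 2) * Real.log (1 + (∑ i ∈ GreedyMAC.Aset σ k, H ω i * P i) / N0))) ℙ :=
    fun k _ => (((h_int _).sub (h_int _)).const_mul _)
  rw [integral_finset_sum _ hint2]
  have hterm : ∀ k ∈ Finset.range M,
      (∫ ω, GreedyMAC.cw w σ k *
          ((1 / 2) * Real.log (1 + (∑ i ∈ GreedyMAC.Aset σ (k + 1), H ω i * P i) / N0)
            - (1 / 2) * Real.log (1 + (∑ i ∈ GreedyMAC.Aset σ k, H ω i * P i) / N0)))
        = GreedyMAC.cw w σ k * (F (GreedyMAC.Aset σ (k + 1)) - F (GreedyMAC.Aset σ k)) := by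
    intro k _
    rw [integral_const_mul, integral_sub (h_int _) (h_int _)]
  rw [Finset.sum_congr rfl hterm, hCa]
  exact ((GreedyMAC.isGreatest_poly w hw σ hσ F hF0 hFmono hFsub).csSup_eq).symm
end
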